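/- Let X be a Banach space and 1 < p < ∞. If X has property (P_p) — every seminormalized weakly null sequence in X admits a subsequence that is a basic sequence equivalent to the unit vector basis of ℓp whose closed linear span is complemented in X — then X has property (R_p): every relatively weakly compact subset A of X that is not relatively norm compact admits a bounded operator u : X → ℓp such that u(A) is not relatively norm compact. -/

import Mathlib

open Filter Topology NormedSpace
open scoped ENNReal NNReal

/-- `Z`, together with the continuous bilinear map `m`, is (a realization of) the projective
tensor product `X ⊗̂π Y`: the span of elementary tensors is dense, and every continuous bilinear
map into a Banach space lifts to a continuous linear map on `Z` with the same norm. -/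
structure IsProjTensorProduct (X Y Z : Type*) [NormedAddCommGroup X] [NormedSpace ℝ X]
    [NormedAddCommGroup Y] [NormedSpace ℝ Y] [NormedAddCommGroup Z] [NormedSpace ℝ Z]
    (m : X →L[ℝ] Y →L[ℝ] Z) : Prop where
  dense_span : Dense (Submodule.span ℝ {z : Z | ∃ x y, m x y = z} : Set Z)
  lift : ∀ (W : Type) [NormedAddCommGroup W] [NormedSpace ℝ W] [CompleteSpace W]
    (B : X →L[ℝ] Y →L[ℝ] W), ∃ T : Z →L[ℝ] W, ‖T‖ = ‖B‖ ∧ ∀ x y, T (m x y) = B x y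

/-- A set is relatively weakly compact if its closure in the weak topology is weakly compact. -/
def RelWeakCompact (X : Type*) [SeminormedAddCommGroup X] [NormedSpace ℝ X] (A : Set X) : Prop :=
  IsCompact (closure ((toWeakSpace ℝ X) '' A))

/-- A set is relatively norm compact if its norm closure is compact. -/
def RelNormCompact (X : Type*) [SeminormedAddCommGroup X] [NormedSpace ℝ X] (A : Set X) : Prop :=
  IsCompact (closure A)

/-- A sequence is weakly Cauchy if every continuous functional sends it to a convergent sequence. -/
def WeaklyCauchySeq {X : Type*} [SeminormedAddCommGroup X] [NormedSpace ℝ X] (x : ℕ → X) : Prop :=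
  ∀ f : X →L[ℝ] ℝ, ∃ l : ℝ, Tendsto (fun n => f (x n)) atTop (nhds l)

/-- A sequence is weakly null if it converges to `0` in the weak topology. -/
def WeaklyNullSeq {X : Type*} [SeminormedAddCommGroup X] [NormedSpace ℝ X] (x : ℕ → X) : Prop :=
  ∀ f : X →L[ℝ] ℝ, Tendsto (fun n => f (x n)) atTop (nhds 0)

/-- A set is weakly precompact if every sequence in it has a weakly Cauchy subsequence. -/
def WeaklyPrecompact {X : Type*} [SeminormedAddCommGroup X] [NormedSpace ℝ X] (A : Set X) : Prop :=
  ∀ x : ℕ → X, (∀ n, x n ∈ A) → ∃ φ : ℕ → ℕ, StrictMono φ ∧ WeaklyCauchySeq (x ∘ φ)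

/-- A (weakly) compact operator maps the closed unit ball to a relatively (weakly) compact set. -/
def WeaklyCompactOp {X Y : Type*} [SeminormedAddCommGroup X] [NormedSpace ℝ X]
    [SeminormedAddCommGroup Y] [NormedSpace ℝ Y] (T : X →L[ℝ] Y) : Prop :=
  RelWeakCompact Y (T '' Metric.closedBall 0 1)

/-- A sequence is seminormalized if `0 < inf ‖xₙ‖ ≤ sup ‖xₙ‖ < ∞`. -/
def Seminormalized {X : Type*} [NormedAddCommGroup X] (x : ℕ → X) : Prop :=
  ∃ a b : ℝ, 0 < a ∧ ∀ n, a ≤ ‖x n‖ ∧ ‖x n‖ ≤ b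

/-- A sequence `z` in `X` is (a basic sequence) equivalent to the unit vector basis of `ℓp`. -/
def EquivLpBasis (p : ℝ≥0∞) [Fact (1 ≤ p)] {X : Type*} [NormedAddCommGroup X]
    [NormedSpace ℝ X] (z : ℕ → X) : Prop :=
  ∃ C C' : ℝ, 0 < C ∧ 0 < C' ∧ ∀ (s : Finset ℕ) (a : ℕ → ℝ),
    C * ‖∑ n ∈ s, a n • (lp.single p n (1 : ℝ) : lp (fun _ : ℕ => ℝ) p)‖ ≤
        ‖∑ n ∈ s, a n • z n‖ ∧
      ‖∑ n ∈ s, a n • z n‖ ≤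
        C' * ‖∑ n ∈ s, a n • (lp.single p n (1 : ℝ) : lp (fun _ : ℕ => ℝ) p)‖

/-- The closed linear span of the sequence `z` is complemented in `X`. -/
def SpanComplemented {X : Type*} [NormedAddCommGroup X] [NormedSpace ℝ X] (z : ℕ → X) : Prop :=
  ∃ P : X →L[ℝ] X, P.comp P = P ∧
    LinearMap.range P.toLinearMap = (Submodule.span ℝ (Set.range z)).topologicalClosure

/-- Property `(P_p)`: every seminormalized weakly null sequence admits a subsequence which is a
basic sequence equivalent to the unit vector basis of `ℓp` with complemented closed linear span. -/
def PropP (p : ℝ≥0∞) [Fact (1 ≤ p)] (X : Type*) [NormedAddCommGroup X]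
    [NormedSpace ℝ X] : Prop :=
  ∀ x : ℕ → X, Seminormalized x → WeaklyNullSeq x →
    ∃ φ : ℕ → ℕ, StrictMono φ ∧ EquivLpBasis p (x ∘ φ) ∧ SpanComplemented (x ∘ φ)

/-- Property `(R_p)`: for every relatively weakly compact set `A` which is not relatively norm
compact there is an operator `u : X → ℓp` with `u(A)` not relatively norm compact. -/
def PropR (p : ℝ≥0∞) [Fact (1 ≤ p)] (X : Type*) [NormedAddCommGroup X]
    [NormedSpace ℝ X] : Prop :=
  ∀ A : Set X, RelWeakCompact X A → ¬ RelNormCompact X A →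
    ∃ u : X →L[ℝ] lp (fun _ : ℕ => ℝ) p, ¬ RelNormCompact _ (u '' A)

open Set TopologicalSpace in
lemma aux_sep_seq {X : Type*} [NormedAddCommGroup X] [NormedSpace ℝ X] [CompleteSpace X]
    {A : Set X} (hA : ¬ RelNormCompact X A) :
    ∃ ε > (0:ℝ), ∃ a : ℕ → X, (∀ n, a n ∈ A) ∧ ∀ m n, m < n → ε ≤ dist (a n) (a m) := by
  have htb : ¬ TotallyBounded A := by
    intro h
    exact hA (isCompact_iff_totallyBounded_isComplete.2
      ⟨h.closure, isClosed_closure.isComplete⟩)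
  rw [Metric.totallyBounded_iff] at htb
  push_neg at htb
  obtain ⟨ε, hε, hcov⟩ := htb
  have key : ∀ t : Finset X, ∃ x ∈ A, ∀ y ∈ t, ε ≤ dist x y := by
    intro t
    obtain ⟨x, hxA, hx⟩ := Set.not_subset.1 (hcov t t.finite_toSet)
    refine ⟨x, hxA, fun y hy => ?_⟩
    by_contra hlt
    exact hx (Set.mem_iUnion₂.2 ⟨y, hy, by simpa [Metric.mem_ball, dist_comm] using not_le.1 hlt⟩)
  classical
  choose F hFA hFd using key
  let g : ℕ → Finset X := fun n => Nat.rec ∅ (fun _ t => insert (F t) t) n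
  have hg : ∀ n, g (n+1) = insert (F (g n)) (g n) := fun n => rfl
  have hmono : ∀ m n, m ≤ n → g m ⊆ g n := by
    intro m n hmn
    induction n with
    | zero => simp [Nat.le_zero.1 hmn]
    | succ k ih =>
      rcases Nat.lt_or_ge m (k+1) with h | h
      · exact (ih (Nat.lt_succ_iff.1 h)).trans (by rw [hg]; exact Finset.subset_insert _ _)
      · simp [Nat.le_antisymm hmn h]
  refine ⟨ε, hε, fun n => F (g n), fun n => hFA _, fun m n hmn => ?_⟩
  have : F (g m) ∈ g n := hmono (m+1) n hmn (by rw [hg]; exact Finset.mem_insert_self _ _)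
  exact hFd (g n) _ this

lemma aux_bounded {X : Type*} [NormedAddCommGroup X] [NormedSpace ℝ X]
    (b : ℕ → X) (hb : ∀ f : X →L[ℝ] ℝ, ∃ C, ∀ n, ‖f (b n)‖ ≤ C) :
    ∃ M, ∀ n, ‖b n‖ ≤ M := by
  obtain ⟨M, hM⟩ := banach_steinhaus (g := fun n => inclusionInDoubleDual ℝ X (b n)) (by
    intro f
    obtain ⟨C, hC⟩ := hb f
    exact ⟨C, fun n => hC n⟩)
  refine ⟨M, fun n => ?_⟩
  have := (inclusionInDoubleDualLi ℝ (E := X)).norm_map (b n)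
  rw [← this]
  exact hM n


section W
open Set TopologicalSpace
variable {X : Type*} [NormedAddCommGroup X] [NormedSpace ℝ X]

-- step A: a norm-closed submodule is closed in the weak topology
lemma aux_weakly_closed (Y : Submodule ℝ X) (hY : IsClosed (Y : Set X)) :
    IsClosed (toWeakSpace ℝ X '' (Y : Set X)) := by
  rw [← isOpen_compl_iff]
  rw [isOpen_iff_forall_mem_open]
  intro w hw
  set x : X := (toWeakSpace ℝ X).symm w with hx
  have hxY : x ∉ (Y : Set X) := by
    intro hmem
    exact hw ⟨x, hmem, by simp [hx]⟩
  obtain ⟨g, u, hgY, hgx⟩ := geometric_hahn_banach_closed_point Y.convex hY hxY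
  -- g vanishes on Y
  have hg0 : ∀ y ∈ Y, g y = 0 := by
    intro y hy
    by_contra hne
    have h2 : ((u + 1) / g y) • y ∈ Y := Y.smul_mem _ hy
    have := hgY _ h2
    rw [map_smul] at this
    simp only [smul_eq_mul] at this
    rw [div_mul_cancel₀ _ hne] at this
    have hu : 0 < u := by simpa using hgY 0 Y.zero_mem
    linarith
  have hu : 0 < u := by simpa using hgY 0 Y.zero_mem
  -- the evaluation map is continuous on the weak space
  have hcont : Continuous fun v : WeakSpace ℝ X => (topDualPairing ℝ X).flip v g :=
    WeakBilin.eval_continuous _ g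
  refine ⟨(fun v : WeakSpace ℝ X => (topDualPairing ℝ X).flip v g) ⁻¹' Set.Ioi u, ?_, ?_, ?_⟩
  · rintro v hv ⟨y, hyY, rfl⟩
    have : g y > u := hv
    have := hg0 y hyY
    simp only [this] at *
    change (topDualPairing ℝ X).flip (toWeakSpace ℝ X y) g ∈ Set.Ioi u at hv
    have heval : (topDualPairing ℝ X).flip (toWeakSpace ℝ X y) g = g y := rfl
    rw [heval] at hv
    simp only [Set.mem_Ioi] at hv
    linarith [hg0 y hyY]
  · exact hcont.isOpen_preimage _ isOpen_Ioi
  · have heval : (topDualPairing ℝ X).flip w g = g x := rfl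
    simp only [Set.mem_preimage, heval, Set.mem_Ioi]
    exact hgx

lemma aux_weak_subseq {A : Set X} (hA : RelWeakCompact X A)
    (a : ℕ → X) (ha : ∀ n, a n ∈ A) :
    ∃ (x₀ : X) (φ : ℕ → ℕ), StrictMono φ ∧
      ∀ f : X →L[ℝ] ℝ, Tendsto (fun n => f (a (φ n))) atTop (𝓝 (f x₀)) := by
  classical
  set Y : Submodule ℝ X := (Submodule.span ℝ (Set.range a)).topologicalClosure with hYdef
  have hYclosed : IsClosed (Y : Set X) := Submodule.isClosed_topologicalClosure _
  have haY : ∀ n, a n ∈ Y :=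
    fun n => (Submodule.span ℝ (Set.range a)).le_topologicalClosure
      (Submodule.subset_span (mem_range_self n))
  -- Y is separable
  have hsep : IsSeparable (Y : Set X) := by
    have h1 : IsSeparable (Set.range a) := (Set.countable_range a).isSeparable
    have h2 := h1.span (R := ℝ)
    simpa [hYdef, Submodule.topologicalClosure_coe] using h2.closure
  obtain ⟨c, hc_count, hc_sub⟩ := hsep
  have hc_ne : c.Nonempty := by
    rcases c.eq_empty_or_nonempty with h | h
    · exfalso
      have := hc_sub Y.zero_mem
      simp [h] at this
    · exact h
  obtain ⟨d, hd⟩ := hc_count.exists_eq_range hc_ne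
  -- dual functionals norming the dense sequence
  have hf : ∀ j, ∃ g : X →L[ℝ] ℝ, ‖g‖ ≤ 1 ∧ g (d j) = ‖d j‖ := fun j =>
    exists_dual_vector'' ℝ (d j)
  choose f hf1 hf2 using hf
  -- the f j separate points of Y
  have hsepar : ∀ v ∈ Y, ∀ w ∈ Y, (∀ j, f j v = f j w) → v = w := by
    intro v hv w hw hvw
    by_contra hne
    set y : X := v - w with hy
    have hy0 : y ≠ 0 := sub_ne_zero.2 hne
    have hyY : y ∈ Y := Y.sub_mem hv hw
    have hyc : y ∈ closure (Set.range d) := by rw [← hd]; exact hc_sub hyY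
    have hn : (0:ℝ) < ‖y‖ := norm_pos_iff.2 hy0
    obtain ⟨z, ⟨j, rfl⟩, hdist⟩ := Metric.mem_closure_iff.1 hyc (‖y‖/3)
      (by linarith)
    have h1 : ‖y‖ - ‖y‖/3 ≤ ‖d j‖ := by
      have := norm_sub_norm_le y (d j)
      rw [dist_eq_norm] at hdist
      linarith
    have h2 : f j y = 0 := by
      have : f j v - f j w = 0 := by rw [hvw j]; ring
      rw [hy, map_sub]; exact this
    have h3 : |f j (y - d j)| ≤ ‖y - d j‖ := by
      calc |f j (y - d j)| ≤ ‖f j‖ * ‖y - d j‖ := (f j).le_opNorm _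
        _ ≤ 1 * ‖y - d j‖ := by
            apply mul_le_mul_of_nonneg_right (hf1 j) (norm_nonneg _)
        _ = ‖y - d j‖ := one_mul _
    rw [dist_eq_norm] at hdist
    have h5 : f j (d j) = ‖d j‖ := hf2 j
    have hms : f j (y - d j) = f j y - f j (d j) := map_sub _ _ _
    have habs : -(‖y - d j‖) ≤ f j y - f j (d j) := by
      rw [← hms]; exact neg_le_of_abs_le h3
    rw [h2, h5] at habs
    linarith
  -- the compact set K
  set K : Set (WeakSpace ℝ X) := closure (toWeakSpace ℝ X '' (Set.range a)) with hK
  have hKcomp : IsCompact K :=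
    hA.of_isClosed_subset isClosed_closure
      (closure_mono (Set.image_mono (Set.range_subset_iff.2 ha)))
  have hKY : K ⊆ toWeakSpace ℝ X '' (Y : Set X) := by
    apply closure_minimal _ (aux_weakly_closed Y hYclosed)
    rintro _ ⟨_, ⟨n, rfl⟩, rfl⟩
    exact ⟨a n, haY n, rfl⟩
  -- embed K into ℝ^ℕ
  haveI : CompactSpace ↥K := isCompact_iff_compactSpace.1 hKcomp
  set Φ : ↥K → (ℕ → ℝ) := fun k j => (topDualPairing ℝ X).flip (k : WeakSpace ℝ X) (f j) with hΦ
  have hΦcont : Continuous Φ := by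
    apply continuous_pi
    intro j
    exact (WeakBilin.eval_continuous _ (f j)).comp continuous_subtype_val
  have hΦinj : Function.Injective Φ := by
    intro k1 k2 hk
    obtain ⟨y1, hy1, he1⟩ := hKY k1.2
    obtain ⟨y2, hy2, he2⟩ := hKY k2.2
    have heq : y1 = y2 := by
      apply hsepar y1 hy1 y2 hy2
      intro j
      have e1 : f j y1 = Φ k1 j := by rw [hΦ]; simp [← he1]; rfl
      have e2 : f j y2 = Φ k2 j := by rw [hΦ]; simp [← he2]; rfl
      rw [e1, e2, hk]
    apply Subtype.ext
    rw [← he1, ← he2, heq]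
  have hemb := (hΦcont.isClosedEmbedding hΦinj).isEmbedding
  haveI : MetrizableSpace ↥K := hemb.metrizableSpace
  -- extract a convergent subsequence
  set k : ℕ → ↥K := fun n => ⟨toWeakSpace ℝ X (a n),
    subset_closure (Set.mem_image_of_mem _ (mem_range_self n))⟩ with hk
  obtain ⟨l, -, φ, hφ, hconv⟩ := isCompact_univ.tendsto_subseq (x := k)
    (fun n => Set.mem_univ _)
  refine ⟨(toWeakSpace ℝ X).symm (l : WeakSpace ℝ X), φ, hφ, fun g => ?_⟩
  have h1 : Tendsto (fun n => ((k (φ n) : WeakSpace ℝ X))) atTop (𝓝 (l : WeakSpace ℝ X)) :=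
    (continuous_subtype_val.tendsto l).comp hconv
  have h2 := ((WeakBilin.eval_continuous ((topDualPairing ℝ X).flip) g).tendsto _).comp h1
  exact h2

end W

open Set in
lemma aux_op (p : ℝ≥0∞) [Fact (1 ≤ p)] (hp : 1 < p) (hp' : p ≠ ⊤)
    {X : Type*} [NormedAddCommGroup X] [NormedSpace ℝ X] [CompleteSpace X]
    (z : ℕ → X) (hb : EquivLpBasis p z) (hc : SpanComplemented z) :
    ∃ u : X →L[ℝ] lp (fun _ : ℕ => ℝ) p,
      ∀ n, u (z n) = (lp.single p n (1:ℝ) : lp (fun _ : ℕ => ℝ) p) := by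
  classical
  obtain ⟨C, C', hC, hC', hbb⟩ := hb
  obtain ⟨P, hPP, hPr⟩ := hc
  have hq : 0 < p.toReal := ENNReal.toReal_pos (zero_lt_one.trans hp).ne' hp'
  set q := p.toReal with hqdef
  -- rewrite the combinations as sums of singles
  have hes : ∀ (s : Finset ℕ) (a : ℕ → ℝ),
      (∑ n ∈ s, a n • (lp.single p n (1:ℝ) : lp (fun _ : ℕ => ℝ) p)) =
        ∑ n ∈ s, lp.single p n (a n) := by
    intro s a
    refine Finset.sum_congr rfl fun n _ => ?_
    rw [← lp.single_smul]
    norm_num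
  -- summability
  have hsum : ∀ a : lp (fun _ : ℕ => ℝ) p, Summable (fun n => (a : ℕ → ℝ) n • z n) := by
    intro a
    rw [summable_iff_cauchySeq_finset, cauchySeq_finset_iff_vanishing_norm]
    intro ε hε
    have hg : Summable (fun n => ‖(a : ℕ → ℝ) n‖ ^ q) := (lp.hasSum_norm hq a).summable
    have hδ : (0:ℝ) < (ε / C') ^ q := Real.rpow_pos_of_pos (by positivity) q
    obtain ⟨s, hs⟩ := summable_iff_vanishing.1 hg (Metric.ball 0 ((ε / C') ^ q))
      (Metric.ball_mem_nhds 0 hδ)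
    refine ⟨s, fun t ht => ?_⟩
    have htail : ∑ n ∈ t, ‖(a : ℕ → ℝ) n‖ ^ q < (ε / C') ^ q := by
      have := hs t ht
      rw [Metric.mem_ball, dist_zero_right, Real.norm_eq_abs] at this
      exact (le_abs_self _).trans_lt this
    have hns : ‖(∑ n ∈ t, lp.single p n ((a : ℕ → ℝ) n) : lp (fun _ : ℕ => ℝ) p)‖ ^ q
        = ∑ n ∈ t, ‖(a : ℕ → ℝ) n‖ ^ q := lp.norm_sum_single hq _ t
    have hlt : ‖(∑ n ∈ t, lp.single p n ((a : ℕ → ℝ) n) : lp (fun _ : ℕ => ℝ) p)‖ < ε / C' := by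
      by_contra hge
      push_neg at hge
      have := Real.rpow_le_rpow (by positivity) hge hq.le
      rw [hns] at this
      linarith
    calc ‖∑ n ∈ t, (a : ℕ → ℝ) n • z n‖
        ≤ C' * ‖∑ n ∈ t, (a : ℕ → ℝ) n • (lp.single p n (1:ℝ) : lp (fun _ : ℕ => ℝ) p)‖ :=
          (hbb t _).2
      _ = C' * ‖(∑ n ∈ t, lp.single p n ((a : ℕ → ℝ) n) : lp (fun _ : ℕ => ℝ) p)‖ := by
          rw [hes]
      _ < C' * (ε / C') := by exact mul_lt_mul_of_pos_left hlt hC'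
      _ = ε := by field_simp
  -- the linear map
  set L : lp (fun _ : ℕ => ℝ) p →ₗ[ℝ] X :=
    { toFun := fun a => ∑' n, (a : ℕ → ℝ) n • z n
      map_add' := by
        intro a b
        have : ∀ n, ((a + b : lp (fun _ : ℕ => ℝ) p) : ℕ → ℝ) n • z n
            = (a : ℕ → ℝ) n • z n + (b : ℕ → ℝ) n • z n := by
          intro n
          rw [lp.coeFn_add]
          simp [add_smul]
        show (∑' n, ((a + b : lp (fun _ : ℕ => ℝ) p) : ℕ → ℝ) n • z n)
            = (∑' n, (a : ℕ → ℝ) n • z n) + ∑' n, (b : ℕ → ℝ) n • z n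
        rw [tsum_congr this, Summable.tsum_add (hsum a) (hsum b)]
      map_smul' := by
        intro c a
        have : ∀ n, ((c • a : lp (fun _ : ℕ => ℝ) p) : ℕ → ℝ) n • z n
            = c • ((a : ℕ → ℝ) n • z n) := by
          intro n
          rw [lp.coeFn_smul]
          simp [smul_smul]
        show (∑' n, ((c • a : lp (fun _ : ℕ => ℝ) p) : ℕ → ℝ) n • z n)
            = c • ∑' n, (a : ℕ → ℝ) n • z n
        rw [tsum_congr this, Summable.tsum_const_smul c (hsum a)] } with hL
  -- norm bounds via limits
  have hlim : ∀ a : lp (fun _ : ℕ => ℝ) p,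
      C * ‖a‖ ≤ ‖L a‖ ∧ ‖L a‖ ≤ C' * ‖a‖ := by
    intro a
    have hhs : HasSum (fun n => (a : ℕ → ℝ) n • z n) (L a) := (hsum a).hasSum
    have h1 : Tendsto (fun s : Finset ℕ => ‖∑ n ∈ s, (a : ℕ → ℝ) n • z n‖)
        atTop (𝓝 ‖L a‖) := (continuous_norm.tendsto _).comp hhs
    have hsingle : HasSum (fun n => (lp.single p n ((a : ℕ → ℝ) n) : lp (fun _ : ℕ => ℝ) p)) a :=
      lp.hasSum_single hp' a
    have h2 : Tendsto (fun s : Finset ℕ =>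
        ‖(∑ n ∈ s, lp.single p n ((a : ℕ → ℝ) n) : lp (fun _ : ℕ => ℝ) p)‖)
        atTop (𝓝 ‖a‖) := (continuous_norm.tendsto _).comp hsingle
    constructor
    · refine le_of_tendsto_of_tendsto' (h2.const_mul C) h1 fun s => ?_
      have := (hbb s (a : ℕ → ℝ)).1
      rwa [hes] at this
    · refine le_of_tendsto_of_tendsto' h1 (h2.const_mul C') fun s => ?_
      have := (hbb s (a : ℕ → ℝ)).2
      rwa [hes] at this
  set T : lp (fun _ : ℕ => ℝ) p →L[ℝ] X :=
    LinearMap.mkContinuous L C' (fun a => (hlim a).2) with hT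
  have hTa : ∀ a, T a = L a := fun a => rfl
  -- T sends singles to z
  have hTz : ∀ n, T (lp.single p n (1:ℝ)) = z n := by
    intro n
    rw [hTa]
    show (∑' m, ((lp.single p n (1:ℝ) : lp (fun _ : ℕ => ℝ) p) : ℕ → ℝ) m • z m) = z n
    rw [tsum_eq_single n]
    · rw [lp.single_apply_self, one_smul]
    · intro m hm
      rw [lp.single_apply_ne p n _ hm, zero_smul]
  -- antilipschitz
  have hanti : AntilipschitzWith (Real.toNNReal C⁻¹) T := by
    apply T.antilipschitz_of_bound
    intro a
    have h1 := (hlim a).1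
    rw [← hTa] at h1
    have hco : ((Real.toNNReal C⁻¹ : ℝ≥0) : ℝ) = C⁻¹ := Real.coe_toNNReal _ (by positivity)
    rw [hco]
    have h2 := mul_le_mul_of_nonneg_left h1 (le_of_lt (inv_pos.2 hC))
    rw [← mul_assoc, inv_mul_cancel₀ hC.ne', one_mul] at h2
    exact h2
  set M : Submodule ℝ X := (Submodule.span ℝ (Set.range z)).topologicalClosure with hM
  have hMclosed : IsClosed (M : Set X) := Submodule.isClosed_topologicalClosure _
  haveI : CompleteSpace ↥M := hMclosed.completeSpace_coe
  -- range T = M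
  have hrange : LinearMap.range (T : lp (fun _ : ℕ => ℝ) p →ₗ[ℝ] X) = M := by
    apply le_antisymm
    · rintro x ⟨a, rfl⟩
      show T a ∈ M
      have hhs : HasSum (fun n => (a : ℕ → ℝ) n • z n) (T a) := (hsum a).hasSum
      have hmem : ∀ s : Finset ℕ, (∑ n ∈ s, (a : ℕ → ℝ) n • z n) ∈
          Submodule.span ℝ (Set.range z) := fun s =>
        Submodule.sum_mem _ fun n _ => Submodule.smul_mem _ _
          (Submodule.subset_span (mem_range_self n))
      have : T a ∈ closure (Submodule.span ℝ (Set.range z) : Set X) :=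
        mem_closure_of_tendsto hhs (Eventually.of_forall hmem)
      exact this
    · apply Submodule.topologicalClosure_minimal
      · rw [Submodule.span_le]
        rintro _ ⟨n, rfl⟩
        exact ⟨lp.single p n 1, hTz n⟩
      · have : IsClosed (Set.range T) := hanti.isClosed_range T.uniformContinuous
        simpa [LinearMap.coe_range] using this
  -- the continuous linear equivalence
  set Tc : lp (fun _ : ℕ => ℝ) p →L[ℝ] ↥M :=
    T.codRestrict M (fun a => by rw [← hrange]; exact ⟨a, rfl⟩) with hTc
  have hker : LinearMap.ker (Tc : lp (fun _ : ℕ => ℝ) p →ₗ[ℝ] ↥M) = ⊥ := by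
    apply LinearMap.ker_eq_bot_of_injective
    intro a b hab
    apply hanti.injective
    have : (Tc a : X) = (Tc b : X) := congrArg Subtype.val hab
    exact this
  have hsurj : LinearMap.range (Tc : lp (fun _ : ℕ => ℝ) p →ₗ[ℝ] ↥M) = ⊤ := by
    rw [LinearMap.range_eq_top]
    rintro ⟨m, hm⟩
    rw [← hrange] at hm
    obtain ⟨a, ha⟩ := hm
    exact ⟨a, Subtype.ext ha⟩
  set E : lp (fun _ : ℕ => ℝ) p ≃L[ℝ] ↥M := ContinuousLinearEquiv.ofBijective Tc hker hsurj
    with hE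
  -- projection into M
  set Pc : X →L[ℝ] ↥M := P.codRestrict M (fun x => by
    rw [← hPr]; exact LinearMap.mem_range_self _ x) with hPc
  refine ⟨(E.symm : ↥M →L[ℝ] lp (fun _ : ℕ => ℝ) p).comp Pc, fun n => ?_⟩
  have hzM : z n ∈ M := (Submodule.span ℝ (Set.range z)).le_topologicalClosure
    (Submodule.subset_span (mem_range_self n))
  have hPz : P (z n) = z n := by
    rw [← hPr] at hzM
    obtain ⟨w, hw⟩ := hzM
    have h2 : P (P w) = P w := by
      have := congrArg (fun Q : X →L[ℝ] X => Q w) hPP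
      simpa using this
    rw [← hw]
    exact h2
  show E.symm (Pc (z n)) = lp.single p n 1
  rw [ContinuousLinearEquiv.symm_apply_eq]
  apply Subtype.ext
  show (Pc (z n) : X) = (E (lp.single p n 1) : X)
  have h1 : (Pc (z n) : X) = P (z n) := rfl
  have h2 : (E (lp.single p n 1) : X) = T (lp.single p n 1) := rfl
  rw [h1, h2, hPz, hTz]


open Set in
set_option synthInstance.maxHeartbeats 1000000 in
theorem stmt10 (p : ℝ≥0∞) [Fact (1 ≤ p)] (hp : 1 < p) (hp' : p ≠ ⊤)
    {X : Type*} [NormedAddCommGroup X] [NormedSpace ℝ X] [CompleteSpace X] (h : PropP p X) : PropR p X := by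
  intro A hwA hnA
  obtain ⟨ε, hε, a, haA, hsep⟩ := aux_sep_seq hnA
  obtain ⟨x₀, φ₁, hφ₁, hconv⟩ := aux_weak_subseq hwA a haA
  set b : ℕ → X := fun n => a (φ₁ n) - x₀ with hbdef
  -- upper bound on the norms
  obtain ⟨M, hM⟩ := aux_bounded (fun n => a (φ₁ n)) (by
    intro f
    obtain ⟨C, hC⟩ := (hconv f).norm.bddAbove_range
    exact ⟨C, fun n => hC (Set.mem_range_self n)⟩)
  -- lower bound eventually
  have hN : ∃ N, ∀ n, N ≤ n → ε/2 ≤ ‖b n‖ := by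
    by_contra hcon
    push_neg at hcon
    obtain ⟨n₁, -, h1⟩ := hcon 0
    obtain ⟨n₂, hn₂, h2⟩ := hcon (n₁ + 1)
    have hlt : φ₁ n₁ < φ₁ n₂ := hφ₁ (by omega)
    have hd := hsep _ _ hlt
    have : dist (a (φ₁ n₂)) (a (φ₁ n₁)) ≤ ‖b n₂‖ + ‖b n₁‖ := by
      rw [dist_eq_norm]
      have : a (φ₁ n₂) - a (φ₁ n₁) = b n₂ - b n₁ := by rw [hbdef]; simp only [sub_sub_sub_cancel_right]
      rw [this]
      exact norm_sub_le _ _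
    linarith
  obtain ⟨N, hNlow⟩ := hN
  set y : ℕ → X := fun n => b (n + N) with hydef
  have hsemi : Seminormalized y := by
    refine ⟨ε/2, M + ‖x₀‖, by linarith, fun n => ⟨hNlow _ (by omega), ?_⟩⟩
    calc ‖y n‖ ≤ ‖a (φ₁ (n + N))‖ + ‖x₀‖ := norm_sub_le _ _
      _ ≤ M + ‖x₀‖ := by have := hM (n + N); linarith
  have hwnull : WeaklyNullSeq y := by
    intro f
    have h1 : Filter.Tendsto (fun n => f (a (φ₁ n)) - f x₀) Filter.atTop (nhds 0) := by
      simpa using (hconv f).sub_const (f x₀)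
    have h2 := h1.comp (Filter.tendsto_add_atTop_nat N)
    have : (fun n => f (y n)) = (fun n => f (a (φ₁ n)) - f x₀) ∘ (fun n => n + N) := by
      funext n
      simp [hydef, hbdef, map_sub]
    rw [this]
    exact h2
  obtain ⟨φ₂, hφ₂, heqb, hcomp⟩ := h y hsemi hwnull
  obtain ⟨u, hu⟩ := aux_op p hp hp' (y ∘ φ₂) heqb hcomp
  refine ⟨u, ?_⟩
  intro hcpt
  set v : ℕ → lp (fun _ : ℕ => ℝ) p := fun n => u (a (φ₁ (φ₂ n + N))) with hvdef
  have hvmem : ∀ n, v n ∈ closure (u '' A) :=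
    fun n => subset_closure ⟨_, haA _, rfl⟩
  obtain ⟨w, -, ψ, hψ, hconv2⟩ := hcpt.tendsto_subseq hvmem
  obtain ⟨K, hK⟩ := (Metric.cauchySeq_iff.1 hconv2.cauchySeq) 1 one_pos
  have hd := hK K le_rfl (K+1) (by omega)
  have hv : ∀ n, v n = lp.single p n 1 + u x₀ := by
    intro n
    have hy : a (φ₁ (φ₂ n + N)) = (y ∘ φ₂) n + x₀ := by
      simp [hydef, hbdef]
    rw [hvdef]
    simp only [hy, map_add, hu n]
  have hdist : (1:ℝ) ≤ dist (v (ψ K)) (v (ψ (K+1))) := by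
    rw [hv, hv, dist_eq_norm]
    have h1 : (lp.single p (ψ K) (1:ℝ) + u x₀) - (lp.single p (ψ (K+1)) 1 + u x₀)
        = (lp.single p (ψ K) (1:ℝ) : lp (fun _ : ℕ => ℝ) p) - lp.single p (ψ (K+1)) 1 := by
      abel
    rw [h1]
    have hne : ψ K ≠ ψ (K+1) := fun hc => by
      have := hψ (by omega : K < K + 1)
      omega
    have h2 := lp.norm_apply_le_norm (zero_lt_one.trans hp).ne'
      ((lp.single p (ψ K) (1:ℝ) : lp (fun _ : ℕ => ℝ) p) - lp.single p (ψ (K+1)) 1) (ψ K)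
    have h3 : ((lp.single p (ψ K) (1:ℝ) : lp (fun _ : ℕ => ℝ) p)
        - lp.single p (ψ (K+1)) 1 : lp (fun _ : ℕ => ℝ) p) (ψ K) = 1 := by
      rw [lp.coeFn_sub]
      simp only [Pi.sub_apply]
      rw [lp.single_apply_self, lp.single_apply_ne p _ _ hne]
      norm_num
    rw [h3] at h2
    simpa using h2
  simp only [Function.comp_apply] at hd
  linarith
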